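/- The graph NM (vertices: nonsingular symmetric 3×3 matrices over GF(2); distinct A, B adjacent iff det(A+B)=0) is isomorphic to the following graph G: the vertices of G are the nonzero vectors v ∈ GF(2)⁶ with Q(v) = 0 and v ∉ N, where Q(x) = x₁x₆ + x₂x₅ + x₃x₄ and N = {w ∈ GF(2)⁶ : w₁ = w₂ = w₃ = 0}; two distinct vertices u, v of G are adjacent if and only if u+v ∈ N or Q(u+v) = 1 (i.e., the line joining u and v either meets N or is secant to the quadric in exactly the two points u and v). -/

import Mathlib

open scoped Classical

/-- The graph `NM`: vertices are the symmetric `3 × 3` matrices over `GF(2)` with nonzero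
determinant; two distinct vertices are adjacent iff their sum is singular. -/
noncomputable def NM :
    SimpleGraph {M : Matrix (Fin 3) (Fin 3) (ZMod 2) // M.IsSymm ∧ M.det ≠ 0} where
  Adj A B := A ≠ B ∧ (A.1 + B.1).det = 0
  symm := ⟨fun A B h => ⟨h.1.symm, by rw [add_comm]; exact h.2⟩⟩
  loopless := ⟨fun A h => h.1 rfl⟩

/-- The hyperbolic quadratic form `Q(x) = x₁x₆ + x₂x₅ + x₃x₄` on `GF(2)⁶`. -/
def quadQ (x : Fin 6 → ZMod 2) : ZMod 2 :=
  x 0 * x 5 + x 1 * x 4 + x 2 * x 3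

/-- Membership in the nuclei plane `N : x₁ = x₂ = x₃ = 0`. -/
def memN (x : Fin 6 → ZMod 2) : Prop :=
  x 0 = 0 ∧ x 1 = 0 ∧ x 2 = 0

/-- The graph `G`: vertices are the nonzero isotropic vectors of `Q` outside the plane `N`;
two distinct vertices `u, v` are adjacent iff the third point `u + v` of the line `uv`
lies in `N`, or the line `uv` is secant to the quadric (`Q(u+v) = 1`). -/
noncomputable def Gquad :
    SimpleGraph {v : Fin 6 → ZMod 2 // v ≠ 0 ∧ quadQ v = 0 ∧ ¬ memN v} where
  Adj u v := u ≠ v ∧ (memN (u.1 + v.1) ∨ quadQ (u.1 + v.1) = 1)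
  symm := ⟨fun u v h => ⟨h.1.symm, by rw [add_comm]; exact h.2⟩⟩
  loopless := ⟨fun u h => h.1 rfl⟩

/-! ### Auxiliary constructions for the isomorphism -/

/-- The symmetric matrix with the six coordinates as entries. -/
def toMat (x : Fin 6 → ZMod 2) : Matrix (Fin 3) (Fin 3) (ZMod 2) :=
  !![x 0, x 3, x 4; x 3, x 1, x 5; x 4, x 5, x 2]

/-- Reading off the six coordinates of a symmetric matrix. -/
def ofMat (M : Matrix (Fin 3) (Fin 3) (ZMod 2)) : Fin 6 → ZMod 2
  | 0 => M 0 0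
  | 1 => M 1 1
  | 2 => M 2 2
  | 3 => M 0 1
  | 4 => M 0 2
  | 5 => M 1 2

/-- An explicit linear change of coordinates. -/
def Lfun (x : Fin 6 → ZMod 2) : Fin 6 → ZMod 2
  | 0 => x 0 + x 2
  | 1 => x 0 + x 1 + x 2
  | 2 => x 0
  | 3 => x 1 + x 2 + x 3 + x 5
  | 4 => x 1 + x 4
  | 5 => x 2 + x 3 + x 4

/-- The inverse of `Lfun`. -/
def Linv (x : Fin 6 → ZMod 2) : Fin 6 → ZMod 2
  | 0 => x 2
  | 1 => x 0 + x 1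
  | 2 => x 0 + x 2
  | 3 => x 1 + x 2 + x 4 + x 5
  | 4 => x 0 + x 1 + x 4
  | 5 => x 3 + x 4 + x 5

section
set_option maxRecDepth 40000
set_option maxHeartbeats 4000000

instance : DecidablePred memN := fun x => by unfold memN; infer_instance

lemma Lfun_add (x y : Fin 6 → ZMod 2) : Lfun (x + y) = Lfun x + Lfun y := by
  funext i
  fin_cases i <;> simp [Lfun] <;> ring

lemma toMat_add (x y : Fin 6 → ZMod 2) : toMat (x + y) = toMat x + toMat y := by
  ext i j
  fin_cases i <;> fin_cases j <;> simp [toMat]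

lemma Linv_Lfun (x : Fin 6 → ZMod 2) : Linv (Lfun x) = x := by
  funext i
  fin_cases i <;> simp [Lfun, Linv] <;> ring_nf <;>
    simp [show (2 : ZMod 2) = 0 by decide]

lemma Lfun_Linv (x : Fin 6 → ZMod 2) : Lfun (Linv x) = x := by
  funext i
  fin_cases i <;> simp [Lfun, Linv] <;> ring_nf <;>
    simp [show (2 : ZMod 2) = 0 by decide]

lemma ofMat_toMat (x : Fin 6 → ZMod 2) : ofMat (toMat x) = x := by
  funext i
  fin_cases i <;> simp [ofMat, toMat]

lemma toMat_ofMat (M : Matrix (Fin 3) (Fin 3) (ZMod 2)) (h : M.IsSymm) :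
    toMat (ofMat M) = M := by
  ext i j
  fin_cases i <;> fin_cases j <;> simp [ofMat, toMat] <;>
    first
      | rfl
      | exact h.apply _ _


lemma toMat_isSymm (x : Fin 6 → ZMod 2) : (toMat x).IsSymm := by
  unfold Matrix.IsSymm
  ext i j
  fin_cases i <;> fin_cases j <;> simp [toMat]

lemma det_toMat (x : Fin 6 → ZMod 2) :
    (toMat x).det = x 0 * x 1 * x 2 + x 0 * x 5 * x 5 + x 1 * x 4 * x 4 + x 2 * x 3 * x 3 := by
  simp [toMat, Matrix.det_fin_three, sub_eq_add_neg, CharTwo.neg_eq]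
  ring_nf
  simp [show (2 : ZMod 2) = 0 from rfl]

/-- The key pointwise identity, checked over all 64 vectors. -/
lemma key (x : Fin 6 → ZMod 2) :
    (toMat (Lfun x)).det = 1 ↔ (x ≠ 0 ∧ quadQ x = 0 ∧ ¬ memN x) := by
  rw [det_toMat]
  revert x
  decide

lemma zmod2_cases (a : ZMod 2) : a = 0 ∨ a = 1 := by
  revert a; decide

lemma key0 (x : Fin 6 → ZMod 2) :
    (toMat (Lfun x)).det = 0 ↔ ¬ (x ≠ 0 ∧ quadQ x = 0 ∧ ¬ memN x) := by
  rw [← key x]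
  rcases zmod2_cases (toMat (Lfun x)).det with h | h <;> simp [h]

lemma zmod2_add_eq_zero {a b : ZMod 2} (h : a + b = 0) : a = b := by
  revert h; revert a b; decide

lemma sum_ne_zero {u v : Fin 6 → ZMod 2} (h : u ≠ v) : u + v ≠ 0 := by
  intro h0
  exact h (funext fun i => zmod2_add_eq_zero (congrFun h0 i))

/-- The vertex bijection. -/
noncomputable def eqv :
    {v : Fin 6 → ZMod 2 // v ≠ 0 ∧ quadQ v = 0 ∧ ¬ memN v} ≃
      {M : Matrix (Fin 3) (Fin 3) (ZMod 2) // M.IsSymm ∧ M.det ≠ 0} where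
  toFun v := ⟨toMat (Lfun v.1), toMat_isSymm _, by
    rw [(key v.1).2 v.2]; exact one_ne_zero⟩
  invFun M := ⟨Linv (ofMat M.1), by
    have h2 : (toMat (Lfun (Linv (ofMat M.1)))).det = 1 := by
      rw [Lfun_Linv, toMat_ofMat _ M.2.1]
      rcases zmod2_cases M.1.det with h | h
      · exact absurd h M.2.2
      · exact h
    exact (key _).1 h2⟩
  left_inv v := by
    ext1; simp only; rw [ofMat_toMat, Linv_Lfun]
  right_inv M := by
    ext1; simp only; rw [Lfun_Linv, toMat_ofMat _ M.2.1]

end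

/-- The graph `NM` is isomorphic to the graph `Gquad` on `Q⁺(5,2) \ N`. -/
theorem NM_iso_Gquad : Nonempty (NM ≃g Gquad) := by
  refine ⟨(⟨eqv, ?_⟩ : Gquad ≃g NM).symm⟩
  intro u v
  show ((eqv u ≠ eqv v) ∧ _) ↔ ((u ≠ v) ∧ _)
  have hne : eqv u ≠ eqv v ↔ u ≠ v := eqv.injective.ne_iff
  have hdet : ((eqv u).1 + (eqv v).1).det = (toMat (Lfun (u.1 + v.1))).det := by
    rw [Lfun_add, toMat_add]; rfl
  constructor
  · rintro ⟨h1, h2⟩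
    have huv : u ≠ v := hne.1 h1
    refine ⟨huv, ?_⟩
    rw [hdet, key0] at h2
    have hz : u.1 + v.1 ≠ 0 := sum_ne_zero (fun h => huv (Subtype.ext h))
    push_neg at h2
    rcases Classical.em (memN (u.1 + v.1)) with hm | hm
    · exact Or.inl hm
    · rcases zmod2_cases (quadQ (u.1 + v.1)) with hq | hq
      · exact absurd (h2 hz hq) hm
      · exact Or.inr hq
  · rintro ⟨huv, h2⟩
    refine ⟨hne.2 huv, ?_⟩
    rw [hdet, key0]
    rintro ⟨-, hq, hm⟩
    rcases h2 with h | h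
    · exact hm h
    · rw [hq] at h; exact one_ne_zero h.symm
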